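/- If the iterate x_{k+1} is an ε_k-suboptimal minimizer of f_{x_k}, then the following inequality holds: (1/m)Σ_{i∈I_in} 1{a_i ∉ W}·|⟨a_i, x_{k+1} - y⟩| - (1/m)Σ_{i∈I_out}|⟨a_i, x_{k+1} - y⟩| ≤ (2/m)Σ_{i∈I_in} 1{a_i ∈ W}·|⟨a_i, y - x_k⟩| + ε_k, where y = φ(x_k)x_star and W = W_{x_k, y}. -/

import Mathlib

open scoped RealInnerProductSpace

/-- Sign function with the convention `sgn 0 = 1`, taking values in `{±1}`. -/
noncomputable def sgn (t : ℝ) : ℝ := if 0 ≤ t then 1 else -1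

/-- The sign `φ(x) ∈ {±1}` minimizing `‖x - α • xs‖`. -/
noncomputable def phi {d : ℕ} (x xs : EuclideanSpace ℝ (Fin d)) : ℝ :=
  if ‖x - xs‖ ≤ ‖x + xs‖ then 1 else -1

lemma sgn_self_mul (t : ℝ) : sgn t * t = |t| := by
  unfold sgn; split
  · simp [abs_of_nonneg ‹_›]
  · rw [abs_of_neg (lt_of_not_ge ‹_›)]; ring

lemma abs_sgn (t : ℝ) : |sgn t| = 1 := by
  unfold sgn; split <;> simp

lemma sgn_ne_sgn {s t : ℝ} (hs : s ≠ 0) (ht : t ≠ 0) (h : sgn s ≠ sgn t) :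
    (0 < s ∧ t < 0) ∨ (s < 0 ∧ 0 < t) := by
  unfold sgn at h
  rcases hs.lt_or_gt with h1 | h1 <;> rcases ht.lt_or_gt with h2 | h2 <;>
    simp [h1.le, h2.le, not_le.2 h1, not_le.2 h2] at h ⊢ <;> tauto

theorem suboptimality_implies_key_inequality {d m : ℕ} (hm : 0 < m)
    (a : Fin m → EuclideanSpace ℝ (Fin d))
    (Iin Iout : Finset (Fin m))
    (hdisj : Disjoint Iin Iout) (hunion : Iin ∪ Iout = Finset.univ)
    (xstar xk x1 y : EuclideanSpace ℝ (Fin d))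
    (b ξ : Fin m → ℝ) (ε : ℝ)
    (hy : y = phi xk xstar • xstar)
    (hbin : ∀ i ∈ Iin, b i = abs ⟪a i, xstar⟫)
    (hbout : ∀ i ∈ Iout, b i = ξ i)
    (hne : ∀ i : Fin m, ⟪a i, xk⟫ ≠ 0 ∧ ⟪a i, y⟫ ≠ 0)
    (hsubopt : (1 / (m : ℝ)) * ∑ i, abs (sgn ⟪a i, xk⟫ * ⟪a i, x1⟫ - b i) ≤
      (1 / (m : ℝ)) * ∑ i, abs (sgn ⟪a i, xk⟫ * ⟪a i, y⟫ - b i) + ε) :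
    (1 / (m : ℝ)) * ∑ i ∈ Iin,
        (if sgn ⟪a i, xk⟫ = sgn ⟪a i, y⟫ then abs ⟪a i, x1 - y⟫ else 0) -
      (1 / (m : ℝ)) * ∑ i ∈ Iout, abs ⟪a i, x1 - y⟫ ≤
    (2 / (m : ℝ)) * ∑ i ∈ Iin,
        (if sgn ⟪a i, xk⟫ = sgn ⟪a i, y⟫ then 0 else abs ⟪a i, y - xk⟫) + ε := by
  have hm' : (0:ℝ) < m := Nat.cast_pos.2 hm
  have hmne : (m:ℝ) ≠ 0 := ne_of_gt hm'
  set L : Fin m → ℝ := fun i => |sgn ⟪a i, xk⟫ * ⟪a i, x1⟫ - b i| with hLdef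
  set R : Fin m → ℝ := fun i => |sgn ⟪a i, xk⟫ * ⟪a i, y⟫ - b i| with hRdef
  have key : ∑ i, L i ≤ ∑ i, R i + m * ε := by
    have h2 := mul_le_mul_of_nonneg_left hsubopt hm'.le
    calc ∑ i, L i = (m:ℝ) * ((1/m) * ∑ i, L i) := by field_simp
    _ ≤ (m:ℝ) * ((1/m) * ∑ i, R i + ε) := h2
    _ = ∑ i, R i + m * ε := by field_simp
  have hin : ∀ i ∈ Iin,
      (if sgn ⟪a i, xk⟫ = sgn ⟪a i, y⟫ then |⟪a i, x1 - y⟫| else 0)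
        - 2 * (if sgn ⟪a i, xk⟫ = sgn ⟪a i, y⟫ then 0 else |⟪a i, y - xk⟫|)
        ≤ L i - R i := by
    intro i hi
    have hb : b i = |⟪a i, y⟫| := by
      rw [hbin i hi, hy, real_inner_smul_right, abs_mul]
      unfold phi; split <;> simp
    by_cases hcase : sgn ⟪a i, xk⟫ = sgn ⟪a i, y⟫
    · simp only [if_pos hcase]
      have hR0 : R i = 0 := by
        rw [hRdef]; simp only []
        rw [hcase, sgn_self_mul, hb, sub_self, abs_zero]
      have hL1 : L i = |⟪a i, x1 - y⟫| := by
        have : b i = sgn ⟪a i, xk⟫ * ⟪a i, y⟫ := by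
          rw [hb, hcase, sgn_self_mul]
        rw [hLdef]
        simp only []
        rw [this, ← mul_sub, abs_mul, abs_sgn, one_mul, inner_sub_right]
      rw [hR0, hL1]; ring_nf; simp
    · simp only [if_neg hcase]
      have hdiff := sgn_ne_sgn (hne i).1 (hne i).2 hcase
      have hRval : R i = 2 * |⟪a i, y⟫| := by
        have hs : sgn ⟪a i, xk⟫ * ⟪a i, y⟫ = -|⟪a i, y⟫| := by
          unfold sgn at hcase ⊢
          rcases hdiff with ⟨h1, h2⟩ | ⟨h1, h2⟩
          · rw [if_pos h1.le, abs_of_neg h2]; ring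
          · rw [if_neg (not_le.2 h1), abs_of_pos h2]; ring
        rw [hRdef]; simp only []
        rw [hs, hb,
          show -|(⟪a i, y⟫:ℝ)| - |(⟪a i, y⟫:ℝ)| = -(2 * |(⟪a i, y⟫:ℝ)|) by ring,
          abs_neg, abs_of_nonneg (by positivity)]
      have hbound : |⟪a i, y⟫| ≤ |⟪a i, y - xk⟫| := by
        rw [inner_sub_right]
        rcases hdiff with ⟨h1, h2⟩ | ⟨h1, h2⟩
        · rw [abs_of_neg h2, abs_of_neg (by linarith)]; linarith
        · rw [abs_of_pos h2, abs_of_pos (by linarith)]; linarith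
      have hLnn : 0 ≤ L i := abs_nonneg _
      nlinarith [hbound, hLnn, hRval]
  have hout : ∀ i ∈ Iout, -|⟪a i, x1 - y⟫| ≤ L i - R i := by
    intro i hi
    have htri : R i ≤ L i + |⟪a i, x1 - y⟫| := by
      have h1 : |sgn ⟪a i, xk⟫ * ⟪a i, y⟫ - b i| ≤
          |sgn ⟪a i, xk⟫ * ⟪a i, y⟫ - sgn ⟪a i, xk⟫ * ⟪a i, x1⟫|
            + |sgn ⟪a i, xk⟫ * ⟪a i, x1⟫ - b i| :=
        abs_sub_le _ _ _
      have h2 : |sgn ⟪a i, xk⟫ * ⟪a i, y⟫ - sgn ⟪a i, xk⟫ * ⟪a i, x1⟫|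
          = |⟪a i, x1 - y⟫| := by
        rw [← mul_sub, abs_mul, abs_sgn, one_mul, inner_sub_right, abs_sub_comm]
      rw [hRdef, hLdef]; simp only []
      calc |sgn ⟪a i, xk⟫ * ⟪a i, y⟫ - b i| ≤ _ := h1
      _ = |sgn ⟪a i, xk⟫ * ⟪a i, x1⟫ - b i| + |⟪a i, x1 - y⟫| := by rw [h2]; ring
    linarith
  have hsplit : ∑ i, (L i - R i) = ∑ i ∈ Iin, (L i - R i) + ∑ i ∈ Iout, (L i - R i) := by
    rw [← Finset.sum_union hdisj, hunion]
  have hcore :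
      (∑ i ∈ Iin, (if sgn ⟪a i, xk⟫ = sgn ⟪a i, y⟫ then |⟪a i, x1 - y⟫| else 0))
        - ∑ i ∈ Iout, |⟪a i, x1 - y⟫|
      ≤ 2 * (∑ i ∈ Iin, (if sgn ⟪a i, xk⟫ = sgn ⟪a i, y⟫ then 0 else |⟪a i, y - xk⟫|))
        + m * ε := by
    have s1 : ∑ i ∈ Iin,
        ((if sgn ⟪a i, xk⟫ = sgn ⟪a i, y⟫ then |⟪a i, x1 - y⟫| else 0)
          - 2 * (if sgn ⟪a i, xk⟫ = sgn ⟪a i, y⟫ then 0 else |⟪a i, y - xk⟫|))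
        ≤ ∑ i ∈ Iin, (L i - R i) := Finset.sum_le_sum hin
    have s2 : ∑ i ∈ Iout, (-|⟪a i, x1 - y⟫|) ≤ ∑ i ∈ Iout, (L i - R i) :=
      Finset.sum_le_sum hout
    have e1 : ∑ i, (L i - R i) = ∑ i, L i - ∑ i, R i := Finset.sum_sub_distrib _ _
    rw [Finset.sum_sub_distrib, ← Finset.mul_sum] at s1
    rw [Finset.sum_neg_distrib] at s2
    rw [e1] at hsplit
    linarith
  have final := mul_le_mul_of_nonneg_left hcore (by positivity : (0:ℝ) ≤ 1/m)
  calc (1 / (m : ℝ)) * ∑ i ∈ Iin,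
        (if sgn ⟪a i, xk⟫ = sgn ⟪a i, y⟫ then abs ⟪a i, x1 - y⟫ else 0) -
      (1 / (m : ℝ)) * ∑ i ∈ Iout, abs ⟪a i, x1 - y⟫
      = (1/m) * ((∑ i ∈ Iin, (if sgn ⟪a i, xk⟫ = sgn ⟪a i, y⟫ then |⟪a i, x1 - y⟫| else 0))
        - ∑ i ∈ Iout, |⟪a i, x1 - y⟫|) := by ring
    _ ≤ (1/m) * (2 * (∑ i ∈ Iin, (if sgn ⟪a i, xk⟫ = sgn ⟪a i, y⟫ then 0 else |⟪a i, y - xk⟫|))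
        + m * ε) := final
    _ = (2 / (m : ℝ)) * ∑ i ∈ Iin,
        (if sgn ⟪a i, xk⟫ = sgn ⟪a i, y⟫ then 0 else abs ⟪a i, y - xk⟫) + ε := by
      field_simp
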